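/- Let K ⊆ ℝ^d be a bounded, closed, convex, centrally symmetric set containing the unit Euclidean ball, and let R be a ν-self-concordant barrier on K. Let δ ∈ (0, 2/3] and let K_δ := {x ∈ ℝ^d : x/(1−δ) ∈ K} be the shrunk set. Then for any x, y ∈ K_δ, ‖y − x‖_x ≤ 2·(1/δ − 1)·(ν + 2√ν), where ‖h‖_x := √(hᵀ∇²R(x)h). -/

import Mathlib

open MeasureTheory Matrix Finset Filter

/-- The Hessian matrix `∇²R(x)` of `R : ℝ^d → ℝ` at `x`, with entries given by the
second iterated Fréchet derivative evaluated at pairs of standard basis vectors. -/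
noncomputable def hessMat (d : ℕ) (R : (Fin d → ℝ) → ℝ) (x : Fin d → ℝ) :
    Matrix (Fin d) (Fin d) ℝ :=
  Matrix.of fun i j => iteratedFDeriv ℝ 2 R x ![Pi.single i 1, Pi.single j 1]

/-- The local norm `‖h‖_x := √(hᵀ ∇²R(x) h)`. -/
noncomputable def locNorm (d : ℕ) (R : (Fin d → ℝ) → ℝ) (x h : Fin d → ℝ) : ℝ :=
  Real.sqrt (h ⬝ᵥ (hessMat d R x).mulVec h)

/-- The dual local norm `‖h‖*_x := √(hᵀ (∇²R(x))⁻¹ h)`. -/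
noncomputable def dualNorm (d : ℕ) (R : (Fin d → ℝ) → ℝ) (x h : Fin d → ℝ) : ℝ :=
  Real.sqrt (h ⬝ᵥ ((hessMat d R x)⁻¹).mulVec h)

/-- `R` is a `ν`-self-concordant barrier on the convex set `K ⊆ ℝ^d`:
`R` is `C³` and convex on `int K`, blows up at the boundary of `K`, and satisfies
`|D³R(x)[h,h,h]| ≤ 2‖h‖_x³` and `|⟨∇R(x),h⟩| ≤ √ν ‖h‖_x` on `int K`. -/
def IsSCBarrier (d : ℕ) (K : Set (Fin d → ℝ)) (ν : ℝ) (R : (Fin d → ℝ) → ℝ) : Prop :=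
  ContDiffOn ℝ 3 R (interior K) ∧
    ConvexOn ℝ (interior K) R ∧
    (∀ b ∈ frontier K, Filter.Tendsto R (nhdsWithin b (interior K)) Filter.atTop) ∧
    (∀ x ∈ interior K, ∀ h : Fin d → ℝ,
      |iteratedFDeriv ℝ 3 R x ![h, h, h]| ≤ 2 * locNorm d R x h ^ 3) ∧
    (∀ x ∈ interior K, ∀ h : Fin d → ℝ,
      |fderiv ℝ R x h| ≤ Real.sqrt ν * locNorm d R x h)

/-- The shrunk set `K_δ := { x | x/(1−δ) ∈ K }`. -/
def shrink (d : ℕ) (δ : ℝ) (K : Set (Fin d → ℝ)) : Set (Fin d → ℝ) :=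
  {x | (1 - δ)⁻¹ • x ∈ K}

section Aux
open Set Filter

private lemma quadForm_eq (d : ℕ) (R : (Fin d → ℝ) → ℝ) (z h : Fin d → ℝ) :
    iteratedFDeriv ℝ 2 R z ![h, h] = h ⬝ᵥ (hessMat d R z).mulVec h := by
  classical
  set f := iteratedFDeriv ℝ 2 R z
  have hh : (![h, h] : Fin 2 → (Fin d → ℝ)) = fun _ => h := by
    funext i; fin_cases i <;> rfl
  have hsum : h = ∑ j : Fin d, h j • (Pi.single j 1 : Fin d → ℝ) := by
    funext k
    simp [Pi.single_apply, Finset.sum_apply]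
  calc f ![h, h] = f (fun i : Fin 2 => ∑ j : Fin d, h j • (Pi.single j 1 : Fin d → ℝ)) := by
        rw [hh, ← hsum]
    _ = ∑ r : Fin 2 → Fin d, f fun i => h (r i) • (Pi.single (r i) 1 : Fin d → ℝ) := by
        exact f.toMultilinearMap.map_sum (fun (i : Fin 2) (j : Fin d) => h j • (Pi.single j 1 : Fin d → ℝ))
    _ = ∑ r : Fin 2 → Fin d, (∏ i : Fin 2, h (r i)) • f fun i => (Pi.single (r i) 1 : Fin d → ℝ) := by
        refine Finset.sum_congr rfl fun r _ => ?_
        exact f.map_smul_univ (fun i => h (r i)) (fun i => Pi.single (r i) 1)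
    _ = ∑ p : Fin d × Fin d, (h p.1 * h p.2) • f ![Pi.single p.1 1, Pi.single p.2 1] := by
        rw [← (finTwoArrowEquiv (Fin d)).symm.sum_comp]
        refine Finset.sum_congr rfl fun p _ => ?_
        have h1 : (∏ i : Fin 2, h ((finTwoArrowEquiv (Fin d)).symm p i)) = h p.1 * h p.2 := by
          simp [finTwoArrowEquiv, Fin.prod_univ_two]
        have h2 : (fun i => (Pi.single ((finTwoArrowEquiv (Fin d)).symm p i) 1 : Fin d → ℝ))
            = ![Pi.single p.1 1, Pi.single p.2 1] := by
          funext i; fin_cases i <;> simp [finTwoArrowEquiv]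
        rw [h1, h2]
    _ = h ⬝ᵥ (hessMat d R z).mulVec h := by
        rw [Fintype.sum_prod_type]
        simp only [dotProduct, Matrix.mulVec, hessMat, Matrix.of_apply, smul_eq_mul]
        refine Finset.sum_congr rfl fun i _ => ?_
        rw [Finset.mul_sum]
        refine Finset.sum_congr rfl fun j _ => ?_
        ring

private lemma smul_mem_interior {d : ℕ} {K : Set (Fin d → ℝ)} (hKconv : Convex ℝ K)
    (hKball : ∀ z : Fin d → ℝ, (∑ i, z i ^ 2) ≤ 1 → z ∈ K)
    {z : Fin d → ℝ} (hz : z ∈ K) {lam : ℝ} (h0 : 0 ≤ lam) (h1 : lam < 1) :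
    lam • z ∈ interior K := by
  set ρ : ℝ := (1 - lam) / (d + 1) with hρ
  have hdpos : (0:ℝ) < d + 1 := by positivity
  have h1l : (0:ℝ) < 1 - lam := by linarith
  have hρpos : 0 < ρ := by positivity
  refine mem_interior.2 ⟨Metric.ball (lam • z) ρ, ?_, Metric.isOpen_ball,
    Metric.mem_ball_self hρpos⟩
  intro w hw
  set u : Fin d → ℝ := (1 - lam)⁻¹ • (w - lam • z) with hu
  have hwu : w = lam • z + (1 - lam) • u := by
    rw [hu, smul_inv_smul₀ (ne_of_gt h1l)]; abel
  have huK : u ∈ K := by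
    apply hKball
    have hbound : ∀ i, u i ^ 2 ≤ (1 / (d + 1)) ^ 2 := by
      intro i
      have h1 : |(w - lam • z) i| ≤ dist w (lam • z) := by
        rw [dist_eq_norm]
        simpa using norm_le_pi_norm (w - lam • z) i
      have h2 : |u i| ≤ 1 / (d + 1) := by
        have : u i = (1 - lam)⁻¹ * (w - lam • z) i := rfl
        rw [this, abs_mul, abs_of_nonneg (by positivity : (0:ℝ) ≤ (1 - lam)⁻¹)]
        have hlt : dist w (lam • z) < ρ := hw
        calc (1 - lam)⁻¹ * |(w - lam • z) i| ≤ (1 - lam)⁻¹ * ρ := by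
              apply mul_le_mul_of_nonneg_left _ (by positivity)
              exact h1.trans hlt.le
          _ = 1 / (d + 1) := by rw [hρ]; field_simp
      calc u i ^ 2 = |u i| ^ 2 := (sq_abs _).symm
        _ ≤ (1 / (d + 1)) ^ 2 := by
            apply pow_le_pow_left₀ (abs_nonneg _) h2
    calc (∑ i, u i ^ 2) ≤ ∑ _i : Fin d, (1 / (d + 1) : ℝ) ^ 2 :=
          Finset.sum_le_sum fun i _ => hbound i
      _ = d * (1 / (d + 1)) ^ 2 := by simp [mul_comm]
      _ ≤ 1 := by
          rw [div_pow, one_pow, mul_div, mul_one, div_le_one (by positivity)]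
          nlinarith [Nat.cast_nonneg (α := ℝ) d]
  rw [hwu]
  exact hKconv hz huK (by linarith) (by linarith) (by ring)

private lemma deriv_nonneg_of_monotoneOn {f : ℝ → ℝ} {q t b : ℝ} (htb : t < b)
    (hm : MonotoneOn f (Set.Icc t b)) (hd : HasDerivAt f q t) : 0 ≤ q := by
  have hs : Tendsto (slope f t) (nhdsWithin t (Set.Ioi t)) (nhds q) :=
    (hasDerivAt_iff_tendsto_slope.1 hd).mono_left
      (nhdsWithin_mono t fun y hy => ne_of_gt hy)
  refine ge_of_tendsto hs ?_
  filter_upwards [Ioo_mem_nhdsGT_of_mem (Set.mem_Ico.2 ⟨le_refl t, htb⟩)] with u hu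
  rw [slope_def_field]
  apply div_nonneg _ (by linarith [hu.1])
  have := hm (Set.mem_Icc.2 ⟨le_refl t, htb.le⟩) (Set.mem_Icc.2 ⟨hu.1.le, hu.2.le⟩) hu.1.le
  linarith

private lemma dikin_lower {q g3 : ℝ → ℝ} {τ α : ℝ} (hα0 : 0 < α) (hατ : α < τ)
    (hqg3 : ∀ t, 0 ≤ t → t < τ → HasDerivAt q (g3 t) t)
    (hg3b : ∀ t, 0 ≤ t → t < τ → |g3 t| ≤ 2 * Real.sqrt (q t) ^ 3)
    {r : ℝ} (hrpos : 0 < r) (hq0 : q 0 = r ^ 2) :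
    ∀ s ∈ Icc 0 α, r ^ 2 / (1 + s * r) ^ 2 ≤ q s := by
  set A : Set ℝ := {s | s ∈ Icc 0 α ∧ ∀ t ∈ Icc 0 s, r ^ 2 / (1 + t * r) ^ 2 ≤ q t} with hA
  have h0A : (0 : ℝ) ∈ A := by
    constructor
    · exact ⟨le_refl 0, hα0.le⟩
    · intro t ht
      have ht0 : t = 0 := le_antisymm ht.2 ht.1
      subst ht0
      simp [hq0]
  have hbdd : BddAbove A := ⟨α, fun s hs => hs.1.2⟩
  have hne : A.Nonempty := ⟨0, h0A⟩
  set b := sSup A with hb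
  have hb0 : 0 ≤ b := le_csSup hbdd h0A
  have hbα : b ≤ α := csSup_le hne fun s hs => hs.1.2
  have hbτ : b < τ := lt_of_le_of_lt hbα hατ
  have hlt : ∀ t, 0 ≤ t → t < b → r ^ 2 / (1 + t * r) ^ 2 ≤ q t := by
    intro t ht htb
    obtain ⟨s, hsA, hts⟩ := exists_lt_of_lt_csSup hne htb
    exact hsA.2 t ⟨ht, hts.le⟩
  have hqb : r ^ 2 / (1 + b * r) ^ 2 ≤ q b := by
    rcases eq_or_lt_of_le hb0 with h | h
    · rw [← h]; exact h0A.2 0 ⟨le_refl 0, le_refl 0⟩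
    · have hcontq : ContinuousAt q b := (hqg3 b hb0 hbτ).continuousAt
      have hden : ContinuousAt (fun t : ℝ => r ^ 2 / (1 + t * r) ^ 2) b := by
        apply ContinuousAt.div continuousAt_const (by fun_prop)
        positivity
      have htend : Tendsto (fun t => q t - r ^ 2 / (1 + t * r) ^ 2) (nhdsWithin b (Iio b))
          (nhds (q b - r ^ 2 / (1 + b * r) ^ 2)) :=
        (hcontq.sub hden).tendsto.mono_left nhdsWithin_le_nhds
      have hev : ∀ᶠ t in nhdsWithin b (Iio b), 0 ≤ q t - r ^ 2 / (1 + t * r) ^ 2 := by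
        filter_upwards [Ioo_mem_nhdsLT_of_mem (Set.mem_Ioc.2 ⟨h, le_refl b⟩)] with t ht
        linarith [hlt t ht.1.le ht.2]
      have := ge_of_tendsto htend hev
      linarith
  have hbA : b ∈ A := by
    refine ⟨⟨hb0, hbα⟩, fun t ht => ?_⟩
    rcases lt_or_eq_of_le ht.2 with h | h
    · exact hlt t ht.1 h
    · rw [h]; exact hqb
  rcases eq_or_lt_of_le hbα with hbeq | hblt
  · intro s hs
    exact hbA.2 s ⟨hs.1, by rw [hbeq]; exact hs.2⟩
  · exfalso
    have hqbpos : 0 < q b := lt_of_lt_of_le (by positivity) hqb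
    have hev : ∀ᶠ t in nhds b, q b / 2 < q t :=
      ((hqg3 b hb0 hbτ).continuousAt).eventually_const_lt (half_lt_self hqbpos)
    obtain ⟨ε₀, hε₀, hball⟩ := Metric.eventually_nhds_iff.1 hev
    set ε : ℝ := min (ε₀ / 2) (α - b) with hε
    have hεpos : 0 < ε := lt_min (by linarith) (by linarith)
    have hbεα : b + ε ≤ α := by
      have := min_le_right (ε₀ / 2) (α - b); simp only [← hε] at this; linarith
    have hqpos' : ∀ t ∈ Icc b (b + ε), 0 < q t := by
      intro t ht
      have : dist t b < ε₀ := by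
        rw [Real.dist_eq, abs_of_nonneg (by linarith [ht.1])]
        have := min_le_left (ε₀ / 2) (α - b)
        have h2 := ht.2
        simp only [← hε] at this
        linarith
      linarith [hball this]
    -- the function u t - t is antitone on Icc b (b+ε)
    have hud : ∀ t ∈ Icc b (b + ε), HasDerivAt (fun s => (Real.sqrt (q s))⁻¹ - s)
        (-(1 / (2 * Real.sqrt (q t)) * g3 t) / (Real.sqrt (q t)) ^ 2 - 1) t := by
      intro t ht
      have htτ : t < τ := by
        have := ht.2; have := hbεα; linarith [hατ]
      have ht0 : 0 ≤ t := le_trans hb0 ht.1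
      have hqt : q t ≠ 0 := ne_of_gt (hqpos' t ht)
      have hs1 : HasDerivAt (fun s => Real.sqrt (q s)) (1 / (2 * Real.sqrt (q t)) * g3 t) t :=
        (Real.hasDerivAt_sqrt hqt).comp t (hqg3 t ht0 htτ)
      have hs2 := hs1.inv (Real.sqrt_ne_zero'.2 (hqpos' t ht))
      exact hs2.sub (hasDerivAt_id t)
  -- derivative is nonpositive
    have hderiv_nonpos : ∀ t ∈ Ioo b (b + ε),
        -(1 / (2 * Real.sqrt (q t)) * g3 t) / (Real.sqrt (q t)) ^ 2 - 1 ≤ 0 := by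
      intro t ht
      have htmem : t ∈ Icc b (b + ε) := Ioo_subset_Icc_self ht
      have hqt : 0 < q t := hqpos' t htmem
      have hst : 0 < Real.sqrt (q t) := Real.sqrt_pos.2 hqt
      have htτ : t < τ := by linarith [ht.2, hbεα, hατ]
      have ht0 : 0 ≤ t := le_trans hb0 ht.1.le
      have hb3 := hg3b t ht0 htτ
      have h1 : -(g3 t) ≤ 2 * Real.sqrt (q t) ^ 3 := by
        have := (abs_le.1 hb3).1; linarith
      have hcube : Real.sqrt (q t) ^ 3 = Real.sqrt (q t) * q t := by
        rw [pow_succ, Real.sq_sqrt hqt.le, mul_comm]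
      have heq : -(1 / (2 * Real.sqrt (q t)) * g3 t) / (Real.sqrt (q t)) ^ 2
          = -(g3 t) / (2 * Real.sqrt (q t) ^ 3) := by
        field_simp
      rw [heq]
      have h2 : -(g3 t) / (2 * Real.sqrt (q t) ^ 3) ≤ 1 := by
        rw [div_le_one (by positivity)]
        exact h1
      linarith
    have hanti : AntitoneOn (fun s => (Real.sqrt (q s))⁻¹ - s) (Icc b (b + ε)) := by
      apply antitoneOn_of_deriv_nonpos (convex_Icc b (b + ε))
      · exact fun t ht => (hud t ht).continuousAt.continuousWithinAt
      · intro t ht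
        rw [interior_Icc] at ht
        exact ((hud t (Ioo_subset_Icc_self ht)).differentiableAt).differentiableWithinAt
      · intro t ht
        rw [interior_Icc] at ht
        rw [(hud t (Ioo_subset_Icc_self ht)).deriv]
        exact hderiv_nonpos t ht
    have hub : (Real.sqrt (q b))⁻¹ ≤ (1 + b * r) / r := by
      have hden : (0:ℝ) < 1 + b * r := by positivity
      have h1 : r / (1 + b * r) ≤ Real.sqrt (q b) := by
        have : r / (1 + b * r) = Real.sqrt ((r / (1 + b * r)) ^ 2) :=
          (Real.sqrt_sq (by positivity)).symm
        rw [this]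
        apply Real.sqrt_le_sqrt
        rw [div_pow]
        exact hqb
      have h2 : 0 < r / (1 + b * r) := by positivity
      calc (Real.sqrt (q b))⁻¹ ≤ (r / (1 + b * r))⁻¹ := by
            apply inv_anti₀ h2 h1
        _ = (1 + b * r) / r := by rw [inv_div]
    have hext : ∀ t ∈ Icc b (b + ε), r ^ 2 / (1 + t * r) ^ 2 ≤ q t := by
      intro t ht
      have h1 : (Real.sqrt (q t))⁻¹ - t ≤ (Real.sqrt (q b))⁻¹ - b :=
        hanti (Set.left_mem_Icc.2 (by linarith)) ht ht.1
      have h2 : (Real.sqrt (q t))⁻¹ ≤ (1 + t * r) / r := by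
        have : (1 + b * r) / r + (t - b) = (1 + t * r) / r := by
          field_simp; ring
        linarith [hub]
      have hqt : 0 < q t := hqpos' t ht
      have hst : 0 < Real.sqrt (q t) := Real.sqrt_pos.2 hqt
      have hden : (0:ℝ) < 1 + t * r := by
        have : 0 ≤ t := le_trans hb0 ht.1
        positivity
      have h3 : r / (1 + t * r) ≤ Real.sqrt (q t) := by
        have h4 : 0 < (Real.sqrt (q t))⁻¹ := by positivity
        calc r / (1 + t * r) = ((1 + t * r) / r)⁻¹ := by rw [inv_div]
          _ ≤ ((Real.sqrt (q t))⁻¹)⁻¹ := by apply inv_anti₀ h4 h2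
          _ = Real.sqrt (q t) := inv_inv _
      calc r ^ 2 / (1 + t * r) ^ 2 = (r / (1 + t * r)) ^ 2 := by rw [div_pow]
        _ ≤ Real.sqrt (q t) ^ 2 := by
            apply pow_le_pow_left₀ (by positivity) h3
        _ = q t := Real.sq_sqrt hqt.le
    have hbεA : b + ε ∈ A := by
      refine ⟨⟨by linarith, hbεα⟩, fun t ht => ?_⟩
      rcases le_or_gt t b with h | h
      · exact hbA.2 t ⟨ht.1, h⟩
      · exact hext t ⟨h.le, ht.2⟩
    have := le_csSup hbdd hbεA
    rw [← hb] at this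
    linarith

private lemma key_one_dim {g1 q g3 : ℝ → ℝ} {ν τ : ℝ}
    (hν : 1 ≤ ν) (hτ : 0 < τ) (hτ1 : τ ≤ 1)
    (hg1q : ∀ t, 0 ≤ t → t < τ → HasDerivAt g1 (q t) t)
    (hqg3 : ∀ t, 0 ≤ t → t < τ → HasDerivAt q (g3 t) t)
    (hqpos : ∀ t, 0 ≤ t → t < τ → 0 ≤ q t)
    (hg3b : ∀ t, 0 ≤ t → t < τ → |g3 t| ≤ 2 * Real.sqrt (q t) ^ 3)
    (hg1b : ∀ t, 0 ≤ t → t < τ → g1 t ^ 2 ≤ ν * q t)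
    (hg10 : 0 ≤ g1 0) :
    Real.sqrt (q 0) * τ ≤ ν + 2 * Real.sqrt ν := by
  set r := Real.sqrt (q 0) with hr
  have hνpos : (0:ℝ) < ν := by linarith
  have hsν : 0 < Real.sqrt ν := Real.sqrt_pos.2 hνpos
  have hνsq : Real.sqrt ν * Real.sqrt ν = ν := Real.mul_self_sqrt hνpos.le
  have hr0 : 0 ≤ r := Real.sqrt_nonneg _
  rcases le_or_gt (r * τ) (Real.sqrt ν) with hcase | hcase
  · nlinarith
  · have hrpos : 0 < r := by nlinarith
    set α := Real.sqrt ν / r with hα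
    have hα0 : 0 < α := by positivity
    have hατ : α < τ := by rw [hα, div_lt_iff₀ hrpos]; nlinarith
    have hαr : α * r = Real.sqrt ν := div_mul_cancel₀ _ (ne_of_gt hrpos)
    have hq0 : q 0 = r ^ 2 := (Real.sq_sqrt (hqpos 0 (le_refl 0) hτ)).symm
    have dikin := dikin_lower hα0 hατ hqg3 hg3b hrpos hq0
    -- lower bound on g1 α
    have hg1α : Real.sqrt ν * r / (1 + Real.sqrt ν) ≤ g1 α := by
      have hΦd : ∀ s ∈ Icc 0 α, HasDerivAt (fun s => g1 s - r ^ 2 * s / (1 + s * r))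
          (q s - r ^ 2 / (1 + s * r) ^ 2) s := by
        intro s hs
        have hs0 : 0 ≤ s := hs.1
        have hden : (0:ℝ) < 1 + s * r := by positivity
        have h1 : HasDerivAt (fun s : ℝ => r ^ 2 * s) (r ^ 2) s := by
          simpa using (hasDerivAt_id s).const_mul (r ^ 2)
        have h2 : HasDerivAt (fun s : ℝ => 1 + s * r) r s := by
          simpa using ((hasDerivAt_id s).mul_const r).const_add 1
        have h3 := h1.div h2 (ne_of_gt hden)
        have h4 : (r ^ 2 * (1 + s * r) - r ^ 2 * s * r) / (1 + s * r) ^ 2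
            = r ^ 2 / (1 + s * r) ^ 2 := by
          rw [div_eq_div_iff (by positivity) (by positivity)]; ring
        rw [h4] at h3
        exact (hg1q s hs0 (lt_of_le_of_lt hs.2 hατ)).sub h3
      have hmono : MonotoneOn (fun s => g1 s - r ^ 2 * s / (1 + s * r)) (Icc 0 α) := by
        apply monotoneOn_of_deriv_nonneg (convex_Icc 0 α)
        · exact fun s hs => (hΦd s hs).continuousAt.continuousWithinAt
        · intro s hs
          rw [interior_Icc] at hs
          exact ((hΦd s (Ioo_subset_Icc_self hs)).differentiableAt).differentiableWithinAt
        · intro s hs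
          rw [interior_Icc] at hs
          rw [(hΦd s (Ioo_subset_Icc_self hs)).deriv]
          have := dikin s (Ioo_subset_Icc_self hs)
          linarith
      have h5 := hmono (Set.left_mem_Icc.2 hα0.le) (Set.right_mem_Icc.2 hα0.le) hα0.le
      norm_num at h5
      have h6 : r ^ 2 * α / (1 + α * r) = Real.sqrt ν * r / (1 + Real.sqrt ν) := by
        rw [show r ^ 2 * α = (α * r) * r by ring, hαr]
      linarith [h5]
    -- semiboundedness: forward barrier bound
    have hsemi : ∀ β, α < β → β < τ → g1 α ≤ ν / (β - α) := by
      intro β hαβ hβτ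
      by_contra hcon
      push_neg at hcon
      have hβα : (0:ℝ) < β - α := by linarith
      have hg1αpos : 0 < g1 α := lt_of_le_of_lt (by positivity) hcon
      have hIsub : ∀ s ∈ Icc α β, 0 ≤ s ∧ s < τ := by
        intro s hs
        exact ⟨le_trans hα0.le hs.1, lt_of_le_of_lt hs.2 hβτ⟩
      have hmono : MonotoneOn g1 (Icc α β) := by
        apply monotoneOn_of_deriv_nonneg (convex_Icc α β)
        · intro s hs
          exact (hg1q s (hIsub s hs).1 (hIsub s hs).2).continuousAt.continuousWithinAt
        · intro s hs
          rw [interior_Icc] at hs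
          have hs' := hIsub s (Ioo_subset_Icc_self hs)
          exact (hg1q s hs'.1 hs'.2).differentiableAt.differentiableWithinAt
        · intro s hs
          rw [interior_Icc] at hs
          have hs' := hIsub s (Ioo_subset_Icc_self hs)
          rw [(hg1q s hs'.1 hs'.2).deriv]
          exact hqpos s hs'.1 hs'.2
      have hpos : ∀ s ∈ Icc α β, 0 < g1 s := by
        intro s hs
        exact lt_of_lt_of_le hg1αpos (hmono (Set.left_mem_Icc.2 (by linarith [hs.1, hs.2])) hs hs.1)
      set s₀ := α + ν / g1 α with hs₀def
      have hνg1 : 0 < ν / g1 α := by positivity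
      have hs₀β : s₀ < β := by
        rw [hs₀def]
        have : ν / g1 α < β - α := by
          rw [div_lt_iff₀ hg1αpos]
          rw [div_lt_iff₀ hβα] at hcon
          linarith
        linarith
      have hs₀mem : s₀ ∈ Icc α β := ⟨by rw [hs₀def]; linarith, hs₀β.le⟩
      have hwd : ∀ s ∈ Icc α β, HasDerivAt (fun s => (g1 s)⁻¹ + s / ν)
          (-(q s) / (g1 s) ^ 2 + 1 / ν) s := by
        intro s hs
        have hs' := hIsub s hs
        exact ((hg1q s hs'.1 hs'.2).inv (ne_of_gt (hpos s hs))).add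
          ((hasDerivAt_id s).div_const ν)
      have hanti : AntitoneOn (fun s => (g1 s)⁻¹ + s / ν) (Icc α β) := by
        apply antitoneOn_of_deriv_nonpos (convex_Icc α β)
        · exact fun s hs => (hwd s hs).continuousAt.continuousWithinAt
        · intro s hs
          rw [interior_Icc] at hs
          exact (hwd s (Ioo_subset_Icc_self hs)).differentiableAt.differentiableWithinAt
        · intro s hs
          rw [interior_Icc] at hs
          have hsmem := Ioo_subset_Icc_self hs
          rw [(hwd s hsmem).deriv]
          have hs' := hIsub s hsmem
          have h1 : g1 s ^ 2 ≤ ν * q s := hg1b s hs'.1 hs'.2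
          have h2 : 0 < g1 s := hpos s hsmem
          have h3 : 1 / ν ≤ q s / g1 s ^ 2 := by
            rw [div_le_div_iff₀ hνpos (by positivity)]
            linarith
          have h4 : -(q s) / g1 s ^ 2 = -(q s / g1 s ^ 2) := by ring
          rw [h4]
          linarith
      have h7 := hanti (Set.left_mem_Icc.2 (by linarith [hs₀mem.2])) hs₀mem hs₀mem.1
      simp only at h7
      have h8 : (g1 s₀)⁻¹ ≤ 0 := by
        have h9 : s₀ / ν - α / ν = 1 / g1 α := by
          rw [hs₀def]
          field_simp
          ring
        have h10 : (g1 α)⁻¹ = 1 / g1 α := (one_div _).symm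
        linarith [h7]
      have := hpos s₀ hs₀mem
      have : 0 < (g1 s₀)⁻¹ := by positivity
      linarith
    -- pass to the limit β → τ and conclude
    set c := Real.sqrt ν * r / (1 + Real.sqrt ν) with hc
    have hcpos : 0 < c := by positivity
    have hlim : c * (τ - α) ≤ ν := by
      by_contra hcon
      push_neg at hcon
      have hid : ν / c * c = ν := div_mul_cancel₀ _ (ne_of_gt hcpos)
      have h1 : ν / c < τ - α := by nlinarith
      set β := (α + ν / c + τ) / 2 with hβ
      have hβ1 : α < β := by
        have h0 : 0 < ν / c := by positivity
        rw [hβ]; linarith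
      have hβ2 : β < τ := by rw [hβ]; linarith
      have h2 := le_trans hg1α (hsemi β hβ1 hβ2)
      have h3 : c * (β - α) ≤ ν := by
        rw [le_div_iff₀ (by linarith)] at h2
        linarith
      have h4 : ν / c < β - α := by rw [hβ]; linarith
      nlinarith [mul_pos hcpos (sub_pos.2 h4), hid]
    -- unfold c and finish
    have h5 : Real.sqrt ν * r * (τ - α) ≤ ν * (1 + Real.sqrt ν) := by
      rw [hc] at hlim
      rw [div_mul_eq_mul_div, div_le_iff₀ (by positivity)] at hlim
      linarith
    have h6 : Real.sqrt ν * (r * τ) ≤ Real.sqrt ν * (ν + 2 * Real.sqrt ν) := by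
      have h7 : r * α = Real.sqrt ν := by rw [mul_comm]; exact hαr
      nlinarith [h5]
    exact le_of_mul_le_mul_left h6 hsν

variable {d : ℕ} {K : Set (Fin d → ℝ)} {R : (Fin d → ℝ) → ℝ}

private lemma line_hasDerivAt (x e : Fin d → ℝ) (t : ℝ) :
    HasDerivAt (fun t : ℝ => x + t • e) e t := by
  simpa using ((hasDerivAt_id t).smul_const e).const_add x

lemma deriv1 (hC3 : ContDiffOn ℝ 3 R (interior K)) {x e : Fin d → ℝ} {t : ℝ}
    (hz : x + t • e ∈ interior K) :
    HasDerivAt (fun t : ℝ => R (x + t • e)) (fderiv ℝ R (x + t • e) e) t := by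
  have hca : ContDiffAt ℝ 3 R (x + t • e) := hC3.contDiffAt (isOpen_interior.mem_nhds hz)
  have hdiff : DifferentiableAt ℝ R (x + t • e) := hca.differentiableAt (by norm_num)
  simpa [Function.comp_def] using hdiff.hasFDerivAt.comp_hasDerivAt t (line_hasDerivAt x e t)

lemma deriv2 (hC3 : ContDiffOn ℝ 3 R (interior K)) {x e : Fin d → ℝ} {t : ℝ}
    (hz : x + t • e ∈ interior K) :
    HasDerivAt (fun t : ℝ => fderiv ℝ R (x + t • e) e)
      (iteratedFDeriv ℝ 2 R (x + t • e) ![e, e]) t := by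
  have hca : ContDiffAt ℝ 3 R (x + t • e) := hC3.contDiffAt (isOpen_interior.mem_nhds hz)
  have hfd : ContDiffAt ℝ 2 (fderiv ℝ R) (x + t • e) := hca.fderiv_right (by norm_num)
  have hD : HasFDerivAt (fderiv ℝ R) (fderiv ℝ (fderiv ℝ R) (x + t • e)) (x + t • e) :=
    (hfd.differentiableAt (by norm_num)).hasFDerivAt
  have h1 : HasDerivAt (fun s : ℝ => fderiv ℝ R (x + s • e))
      (fderiv ℝ (fderiv ℝ R) (x + t • e) e) t := by
    simpa [Function.comp_def] using hD.comp_hasDerivAt t (line_hasDerivAt x e t)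
  have h2 := h1.clm_apply (hasDerivAt_const t e)
  simp only [map_zero, add_zero] at h2
  have h3 : iteratedFDeriv ℝ 2 R (x + t • e) ![e, e]
      = fderiv ℝ (fderiv ℝ R) (x + t • e) e e := by
    rw [iteratedFDeriv_two_apply]
    simp
  rw [h3]
  exact h2

lemma deriv3 (hC3 : ContDiffOn ℝ 3 R (interior K)) {x e : Fin d → ℝ} {t : ℝ}
    (hz : x + t • e ∈ interior K) :
    HasDerivAt (fun t : ℝ => iteratedFDeriv ℝ 2 R (x + t • e) ![e, e])
      (iteratedFDeriv ℝ 3 R (x + t • e) ![e, e, e]) t := by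
  have hmem := isOpen_interior.mem_nhds hz
  have h1 : DifferentiableOn ℝ (iteratedFDerivWithin ℝ 2 R (interior K)) (interior K) :=
    hC3.differentiableOn_iteratedFDerivWithin (by norm_num) isOpen_interior.uniqueDiffOn
  have h2 : DifferentiableAt ℝ (iteratedFDerivWithin ℝ 2 R (interior K)) (x + t • e) :=
    (h1 _ hz).differentiableAt hmem
  have h3 : iteratedFDerivWithin ℝ 2 R (interior K) =ᶠ[nhds (x + t • e)] iteratedFDeriv ℝ 2 R :=
    Filter.eventuallyEq_of_mem hmem fun w hw => iteratedFDerivWithin_of_isOpen 2 isOpen_interior hw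
  have h4 : DifferentiableAt ℝ (iteratedFDeriv ℝ 2 R) (x + t • e) := h2.congr_of_eventuallyEq h3.symm
  have hF : HasDerivAt (fun s : ℝ => iteratedFDeriv ℝ 2 R (x + s • e))
      (fderiv ℝ (iteratedFDeriv ℝ 2 R) (x + t • e) e) t := by
    simpa [Function.comp_def] using h4.hasFDerivAt.comp_hasDerivAt t (line_hasDerivAt x e t)
  have hEv := ((ContinuousMultilinearMap.apply ℝ (fun _ : Fin 2 => (Fin d → ℝ)) ℝ
      ![e, e]).hasFDerivAt).comp_hasDerivAt t hF
  have h5 : iteratedFDeriv ℝ 3 R (x + t • e) ![e, e, e]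
      = fderiv ℝ (iteratedFDeriv ℝ 2 R) (x + t • e) e ![e, e] := by
    rw [iteratedFDeriv_succ_apply_left]
    rfl
  rw [h5]
  simpa [Function.comp_def] using hEv

end Aux

/-- **Uniform bound on local norms over the shrunk set (Lemma 3).**
Let `K ⊆ ℝ^d` be bounded, closed, convex, centrally symmetric and contain the unit
Euclidean ball, and let `R` be a `ν`-self-concordant barrier on `K`.  For
`δ ∈ (0, 2/3]` and any `x, y` in the shrunk set `K_δ = {z : z/(1−δ) ∈ K}`,
`‖y − x‖_x ≤ 2 (1/δ − 1)(ν + 2√ν)`. -/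
theorem locNorm_bound_on_shrink (d : ℕ) (K : Set (Fin d → ℝ))
    (hKbdd : Bornology.IsBounded K) (hKcl : IsClosed K) (hKconv : Convex ℝ K)
    (hKsym : ∀ z ∈ K, -z ∈ K)
    (hKball : ∀ z : Fin d → ℝ, (∑ i, z i ^ 2) ≤ 1 → z ∈ K)
    (ν : ℝ) (hν : 1 ≤ ν) (R : (Fin d → ℝ) → ℝ) (hR : IsSCBarrier d K ν R)
    (δ : ℝ) (hδ0 : 0 < δ) (hδ1 : δ ≤ 2 / 3)
    (x y : Fin d → ℝ) (hx : x ∈ shrink d δ K) (hy : y ∈ shrink d δ K) :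
    locNorm d R x (y - x) ≤ 2 * (1 / δ - 1) * (ν + 2 * Real.sqrt ν) := by
  obtain ⟨hC3, hConv, _hBlow, hD3, hD1⟩ := hR
  have hδ1' : δ < 1 := lt_of_le_of_lt hδ1 (by norm_num)
  have h1δ : (0:ℝ) < 1 - δ := by linarith
  have hνpos : (0:ℝ) < ν := by linarith
  set τ : ℝ := δ / (2 * (1 - δ)) with hτdef
  have hτpos : 0 < τ := by positivity
  have hτ1 : τ ≤ 1 := by
    rw [hτdef, div_le_one (by positivity)]; linarith
  have hx' : (1 - δ)⁻¹ • x ∈ K := hx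
  have hy' : (1 - δ)⁻¹ • y ∈ K := hy
  have hne : (1 - δ) ≠ 0 := ne_of_gt h1δ
  have hmain : ∀ e : Fin d → ℝ, (e = y - x ∨ e = x - y) →
      0 ≤ fderiv ℝ R x e →
      Real.sqrt (iteratedFDeriv ℝ 2 R x ![e, e]) * τ ≤ ν + 2 * Real.sqrt ν := by
    intro e he hsign
    have hmemint : ∀ s : ℝ, 0 ≤ s → s < τ → x + s • e ∈ interior K := by
      intro s hs0 hsτ
      rcases he with he | he
      · subst he
        have hs1 : s ≤ 1 := le_trans hsτ.le hτ1
        have hzK : (1 - s) • ((1 - δ)⁻¹ • x) + s • ((1 - δ)⁻¹ • y) ∈ K :=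
          hKconv hx' hy' (by linarith) hs0 (by ring)
        have heq : x + s • (y - x)
            = (1 - δ) • ((1 - s) • ((1 - δ)⁻¹ • x) + s • ((1 - δ)⁻¹ • y)) := by
          match_scalars <;> field_simp <;> ring
        rw [heq]
        exact smul_mem_interior hKconv hKball hzK (by linarith) (by linarith)
      · subst he
        have h2s : (0:ℝ) < 1 + 2 * s := by linarith
        have h2s' : (1 + 2 * s) ≠ 0 := ne_of_gt h2s
        have hzK : ((1 + s) / (1 + 2 * s)) • ((1 - δ)⁻¹ • x)
            + (s / (1 + 2 * s)) • (-((1 - δ)⁻¹ • y)) ∈ K :=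
          hKconv hx' (hKsym _ hy') (by positivity) (by positivity) (by field_simp; ring)
        have heq : x + s • (x - y)
            = ((1 - δ) * (1 + 2 * s)) • (((1 + s) / (1 + 2 * s)) • ((1 - δ)⁻¹ • x)
              + (s / (1 + 2 * s)) • (-((1 - δ)⁻¹ • y))) := by
          match_scalars <;> field_simp <;> ring
        rw [heq]
        apply smul_mem_interior hKconv hKball hzK (by positivity)
        have hs' : s * (2 * (1 - δ)) < δ := by
          rw [hτdef, lt_div_iff₀ (by positivity)] at hsτ
          exact hsτ
        nlinarith
    set g1 : ℝ → ℝ := fun s => fderiv ℝ R (x + s • e) e with hg1def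
    set q : ℝ → ℝ := fun s => iteratedFDeriv ℝ 2 R (x + s • e) ![e, e] with hqdef
    set g3 : ℝ → ℝ := fun s => iteratedFDeriv ℝ 3 R (x + s • e) ![e, e, e] with hg3def
    have hg1q : ∀ t, 0 ≤ t → t < τ → HasDerivAt g1 (q t) t := fun t h1 h2 =>
      deriv2 hC3 (hmemint t h1 h2)
    have hqg3 : ∀ t, 0 ≤ t → t < τ → HasDerivAt q (g3 t) t := fun t h1 h2 =>
      deriv3 hC3 (hmemint t h1 h2)
    have hloc : ∀ t : ℝ, locNorm d R (x + t • e) e = Real.sqrt (q t) := by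
      intro t
      simp only [locNorm, hqdef]
      rw [← quadForm_eq]
    have hqpos : ∀ t, 0 ≤ t → t < τ → 0 ≤ q t := by
      intro t ht0 htτ
      set c := (t + τ) / 2 with hc
      have htc : t < c := by rw [hc]; linarith
      have hcτ : c < τ := by rw [hc]; linarith
      have hsubint : ∀ s ∈ Set.Icc (0:ℝ) c, x + s • e ∈ interior K := fun s hs =>
        hmemint s hs.1 (lt_of_le_of_lt hs.2 hcτ)
      have haff : ∀ s : ℝ, (AffineMap.lineMap x (x + e) : ℝ →ᵃ[ℝ] (Fin d → ℝ)) s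
          = x + s • e := by
        intro s
        rw [AffineMap.lineMap_apply_module]
        module
      have hcomp := hConv.comp_affineMap (AffineMap.lineMap x (x + e) : ℝ →ᵃ[ℝ] (Fin d → ℝ))
      have hfe : (R ∘ (AffineMap.lineMap x (x + e) : ℝ →ᵃ[ℝ] (Fin d → ℝ)))
          = fun s : ℝ => R (x + s • e) := by
        funext s
        simp only [Function.comp_apply, haff s]
      rw [hfe] at hcomp
      have hsub : Set.Icc (0:ℝ) c
          ⊆ (AffineMap.lineMap x (x + e) : ℝ →ᵃ[ℝ] (Fin d → ℝ)) ⁻¹' interior K := by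
        intro s hs
        rw [Set.mem_preimage, haff s]
        exact hsubint s hs
      have hCon2 : ConvexOn ℝ (Set.Icc (0:ℝ) c) (fun s : ℝ => R (x + s • e)) :=
        hcomp.subset hsub (convex_Icc _ _)
      have hdiff : ∀ s ∈ Set.Icc (0:ℝ) c, DifferentiableAt ℝ (fun s : ℝ => R (x + s • e)) s :=
        fun s hs => (deriv1 hC3 (hsubint s hs)).differentiableAt
      have hmono := hCon2.monotoneOn_deriv hdiff
      have hmono1 : MonotoneOn g1 (Set.Icc t c) := by
        intro a ha b hb hab
        have ha' : a ∈ Set.Icc (0:ℝ) c := ⟨le_trans ht0 ha.1, ha.2⟩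
        have hb' : b ∈ Set.Icc (0:ℝ) c := ⟨le_trans ht0 hb.1, hb.2⟩
        have e1 : deriv (fun s : ℝ => R (x + s • e)) a = g1 a :=
          (deriv1 hC3 (hsubint a ha')).deriv
        have e2 : deriv (fun s : ℝ => R (x + s • e)) b = g1 b :=
          (deriv1 hC3 (hsubint b hb')).deriv
        rw [← e1, ← e2]
        exact hmono ha' hb' hab
      exact deriv_nonneg_of_monotoneOn htc hmono1 (hg1q t ht0 htτ)
    have hg3b : ∀ t, 0 ≤ t → t < τ → |g3 t| ≤ 2 * Real.sqrt (q t) ^ 3 := by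
      intro t h1 h2
      have := hD3 _ (hmemint t h1 h2) e
      rwa [hloc t] at this
    have hg1b : ∀ t, 0 ≤ t → t < τ → g1 t ^ 2 ≤ ν * q t := by
      intro t h1 h2
      have h := hD1 _ (hmemint t h1 h2) e
      rw [hloc t] at h
      have h3 : g1 t ^ 2 ≤ (Real.sqrt ν * Real.sqrt (q t)) ^ 2 := by
        rw [← sq_abs]
        exact pow_le_pow_left₀ (abs_nonneg _) h 2
      rwa [mul_pow, Real.sq_sqrt hνpos.le, Real.sq_sqrt (hqpos t h1 h2)] at h3
    have hg10 : 0 ≤ g1 0 := by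
      simp only [hg1def]
      simpa using hsign
    have hkey := key_one_dim hν hτpos hτ1 hg1q hqg3 hqpos hg3b hg1b hg10
    have hq0 : q 0 = iteratedFDeriv ℝ 2 R x ![e, e] := by
      simp only [hqdef]
      norm_num
    rwa [hq0] at hkey
  have hRHS : 2 * (1 / δ - 1) * (ν + 2 * Real.sqrt ν) = (ν + 2 * Real.sqrt ν) / τ := by
    rw [hτdef]
    field_simp
  rcases le_or_gt 0 (fderiv ℝ R x (y - x)) with hsgn | hsgn
  · have h := hmain (y - x) (Or.inl rfl) hsgn
    have hln : locNorm d R x (y - x)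
        = Real.sqrt (iteratedFDeriv ℝ 2 R x ![y - x, y - x]) := by
      simp only [locNorm]
      rw [← quadForm_eq]
    rw [hln, hRHS, le_div_iff₀ hτpos]
    exact h
  · have hsgn' : 0 ≤ fderiv ℝ R x (x - y) := by
      have hxy : x - y = -(y - x) := by abel
      rw [hxy, map_neg]
      linarith
    have h := hmain (x - y) (Or.inr rfl) hsgn'
    have hswap : iteratedFDeriv ℝ 2 R x ![x - y, x - y]
        = iteratedFDeriv ℝ 2 R x ![y - x, y - x] := by
      rw [quadForm_eq d R x (x - y), quadForm_eq d R x (y - x),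
        show x - y = -(y - x) by abel, Matrix.mulVec_neg, neg_dotProduct,
        dotProduct_neg, neg_neg]
    rw [hswap] at h
    have hln : locNorm d R x (y - x)
        = Real.sqrt (iteratedFDeriv ℝ 2 R x ![y - x, y - x]) := by
      simp only [locNorm]
      rw [← quadForm_eq]
    rw [hln, hRHS, le_div_iff₀ hτpos]
    exact h
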